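/- Let n ≥ 2, A > 0, α ≥ 0, l > 0, and let β satisfy n+1 ≤ β < α + 2n − 1; set γ = (β−n+1)/(n+α) ∈ (0,1). Then there exist constants N > 1 and M > 0 (depending only on A, α, β, n and l) such that the function W(x) = −M·x_n^γ·√(N²l² − |x'|²) satisfies det D²W(x) ≥ A·x_n^{β−n−1}·|W(x)|^{−α} at every point x = (x', x_n) with x_n > 0 and |x'| ≤ l. -/

import Mathlib

/-- The determinant of the Hessian matrix of `u` at `x`. -/
noncomputable def hessianDet {n : ℕ} (u : EuclideanSpace ℝ (Fin n) → ℝ)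
    (x : EuclideanSpace ℝ (Fin n)) : ℝ :=
  (Matrix.of fun i j : Fin n =>
    iteratedFDeriv ℝ 2 u x ![EuclideanSpace.single i (1 : ℝ), EuclideanSpace.single j (1 : ℝ)]).det

/-- The last coordinate index of `Fin n`. -/
def lastIdx (n : ℕ) (hn : 0 < n) : Fin n := ⟨n - 1, Nat.sub_lt hn one_pos⟩

open Finset Real

variable {n : ℕ} (k : Fin n) (M γ c : ℝ)

noncomputable def prj (j : Fin n) : EuclideanSpace ℝ (Fin n) →L[ℝ] ℝ := EuclideanSpace.proj j
noncomputable def sq2 (x : EuclideanSpace ℝ (Fin n)) : ℝ := ∑ j ∈ Finset.univ.erase k, x j ^ 2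
noncomputable def Lsum (x : EuclideanSpace ℝ (Fin n)) : EuclideanSpace ℝ (Fin n) →L[ℝ] ℝ :=
  ∑ j ∈ Finset.univ.erase k, (x j) • prj j

@[simp] theorem prj_apply (j : Fin n) (y : EuclideanSpace ℝ (Fin n)) : prj j y = y j := rfl

theorem prj_single (i j : Fin n) :
    prj j (EuclideanSpace.single i (1:ℝ)) = if j = i then 1 else 0 := by
  rw [prj_apply, EuclideanSpace.single_apply]

theorem Lsum_single (x : EuclideanSpace ℝ (Fin n)) (i : Fin n) :
    Lsum k x (EuclideanSpace.single i (1:ℝ)) = if i = k then 0 else x i := by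
  unfold Lsum
  rw [ContinuousLinearMap.sum_apply]
  by_cases hik : i = k
  · subst hik
    rw [if_pos rfl]
    refine Finset.sum_eq_zero fun j hj => ?_
    rw [ContinuousLinearMap.smul_apply, prj_single, if_neg (Finset.ne_of_mem_erase hj),
      smul_zero]
  · rw [if_neg hik]
    rw [Finset.sum_eq_single_of_mem i (Finset.mem_erase.2 ⟨hik, Finset.mem_univ i⟩)]
    · rw [ContinuousLinearMap.smul_apply, prj_single, if_pos rfl, smul_eq_mul, mul_one]
    · intro j hj hji
      rw [ContinuousLinearMap.smul_apply, prj_single, if_neg hji, smul_zero]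

theorem hasFDerivAt_sq2 (x : EuclideanSpace ℝ (Fin n)) :
    HasFDerivAt (fun y : EuclideanSpace ℝ (Fin n) => sq2 k y) ((2:ℝ) • Lsum k x) x := by
  have h : ∀ j ∈ Finset.univ.erase k, HasFDerivAt (fun y : EuclideanSpace ℝ (Fin n) => y j ^ 2)
      ((2 * x j) • prj j) x := by
    intro j _
    have h1 : HasDerivAt (fun t : ℝ => t ^ 2) (2 * x j) (x j) := by
      simpa using hasDerivAt_pow 2 (x j)
    exact h1.comp_hasFDerivAt x ((prj (n := n) j).hasFDerivAt)
  have := HasFDerivAt.fun_sum h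
  unfold sq2 Lsum
  refine this.congr_fderiv ?_
  rw [Finset.smul_sum]
  congr 1; ext j v
  simp [smul_smul]

theorem hasFDerivAt_sqrtc (x : EuclideanSpace ℝ (Fin n)) (hx : sq2 k x < c) :
    HasFDerivAt (fun y : EuclideanSpace ℝ (Fin n) => Real.sqrt (c - sq2 k y))
      ((-(Real.sqrt (c - sq2 k x))⁻¹) • Lsum k x) x := by
  have h0 : (0:ℝ) < c - sq2 k x := by linarith
  have hs : HasDerivAt Real.sqrt (1 / (2 * Real.sqrt (c - sq2 k x))) (c - sq2 k x) :=
    Real.hasDerivAt_sqrt (ne_of_gt h0)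
  have hinner : HasFDerivAt (fun y : EuclideanSpace ℝ (Fin n) => c - sq2 k y)
      (-((2:ℝ) • Lsum k x)) x := (hasFDerivAt_sq2 k x).const_sub c
  have := hs.comp_hasFDerivAt x hinner
  refine this.congr_fderiv ?_
  ext v
  have hF : Real.sqrt (c - sq2 k x) ≠ 0 := by positivity
  simp only [ContinuousLinearMap.coe_smul', Pi.smul_apply, ContinuousLinearMap.neg_apply,
    ContinuousLinearMap.coe_smul, smul_eq_mul, ContinuousLinearMap.coe_neg', Pi.neg_apply]
  field_simp

theorem hasFDerivAt_powk (x : EuclideanSpace ℝ (Fin n)) (hx : x k ≠ 0) (p : ℝ) :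
    HasFDerivAt (fun y : EuclideanSpace ℝ (Fin n) => y k ^ p)
      ((p * x k ^ (p - 1)) • prj k) x := by
  have h1 : HasDerivAt (fun t : ℝ => t ^ p) (p * x k ^ (p - 1)) (x k) :=
    Real.hasDerivAt_rpow_const (Or.inl hx)
  exact h1.comp_hasFDerivAt x ((prj (n := n) k).hasFDerivAt)

theorem hasFDerivAt_invsqrtc (x : EuclideanSpace ℝ (Fin n)) (hx : sq2 k x < c) :
    HasFDerivAt (fun y : EuclideanSpace ℝ (Fin n) => (Real.sqrt (c - sq2 k y))⁻¹)
      (((Real.sqrt (c - sq2 k x))⁻¹ ^ 3) • Lsum k x) x := by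
  have h0 : (0:ℝ) < c - sq2 k x := by linarith
  have hF : Real.sqrt (c - sq2 k x) ≠ 0 := by positivity
  have hs : HasDerivAt (fun u : ℝ => Real.sqrt (c - u)) (-(1 / (2 * Real.sqrt (c - sq2 k x))))
      (sq2 k x) := by
    have h1 : HasDerivAt (fun u : ℝ => c - u) (-1) (sq2 k x) := (hasDerivAt_id _).const_sub c
    have := (Real.hasDerivAt_sqrt (ne_of_gt h0)).comp (sq2 k x) h1
    refine this.congr_deriv ?_; ring
  have hinv : HasDerivAt (fun u : ℝ => (Real.sqrt (c - u))⁻¹)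
      ((1 / (2 * Real.sqrt (c - sq2 k x))) / (Real.sqrt (c - sq2 k x)) ^ 2) (sq2 k x) := by
    have := hs.inv hF
    refine this.congr_deriv ?_; rw [neg_neg]
  have := hinv.comp_hasFDerivAt x (hasFDerivAt_sq2 k x)
  refine this.congr_fderiv ?_
  rw [smul_smul]
  congr 1
  set F := Real.sqrt (c - sq2 k x) with hFdef
  field_simp

noncomputable def DW (x : EuclideanSpace ℝ (Fin n)) : EuclideanSpace ℝ (Fin n) →L[ℝ] ℝ :=
  (-M * γ * x k ^ (γ - 1) * Real.sqrt (c - sq2 k x)) • prj k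
    + (M * x k ^ γ * (Real.sqrt (c - sq2 k x))⁻¹) • Lsum k x

theorem hasFDerivAt_W (x : EuclideanSpace ℝ (Fin n)) (hx : 0 < x k) (hs : sq2 k x < c) :
    HasFDerivAt (fun y : EuclideanSpace ℝ (Fin n) => -M * y k ^ γ * Real.sqrt (c - sq2 k y))
      (DW k M γ c x) x := by
  have h0 : (0:ℝ) < c - sq2 k x := by linarith
  have hF : Real.sqrt (c - sq2 k x) ≠ 0 := by positivity
  have h1 : HasFDerivAt (fun y : EuclideanSpace ℝ (Fin n) => -M * y k ^ γ)
      ((-M) • ((γ * x k ^ (γ - 1)) • prj k)) x :=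
    (hasFDerivAt_powk k x (ne_of_gt hx) γ).const_mul (-M)
  have h2 := hasFDerivAt_sqrtc k c x hs
  have := h1.mul h2
  refine this.congr_fderiv ?_
  unfold DW
  ext v
  simp only [ContinuousLinearMap.add_apply, ContinuousLinearMap.coe_smul', Pi.smul_apply,
    smul_eq_mul, ContinuousLinearMap.coe_neg', Pi.neg_apply]
  have hX : x k ^ γ * (Real.sqrt (c - sq2 k x))⁻¹ * Lsum k x v
      = x k ^ γ * ((Real.sqrt (c - sq2 k x))⁻¹ * Lsum k x v) := by ring
  field_simp
  ring

/-- scalar coefficient `c₂`. -/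
theorem hasFDerivAt_c2 (x : EuclideanSpace ℝ (Fin n)) (hx : 0 < x k) (hs : sq2 k x < c) :
    HasFDerivAt (fun y : EuclideanSpace ℝ (Fin n) =>
        M * y k ^ γ * (Real.sqrt (c - sq2 k y))⁻¹)
      ((M * γ * x k ^ (γ - 1) * (Real.sqrt (c - sq2 k x))⁻¹) • prj k
        + (M * x k ^ γ * (Real.sqrt (c - sq2 k x))⁻¹ ^ 3) • Lsum k x) x := by
  have h1 : HasFDerivAt (fun y : EuclideanSpace ℝ (Fin n) => M * y k ^ γ)
      (M • ((γ * x k ^ (γ - 1)) • prj k)) x :=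
    (hasFDerivAt_powk k x (ne_of_gt hx) γ).const_mul M
  have h2 := hasFDerivAt_invsqrtc k c x hs
  have := h1.mul h2
  refine this.congr_fderiv ?_
  ext v
  simp only [ContinuousLinearMap.add_apply, ContinuousLinearMap.coe_smul', Pi.smul_apply,
    smul_eq_mul]
  ring

noncomputable def C2 (x : EuclideanSpace ℝ (Fin n)) : ℝ :=
  M * x k ^ γ * (Real.sqrt (c - sq2 k x))⁻¹

noncomputable def dc2 (x : EuclideanSpace ℝ (Fin n)) : EuclideanSpace ℝ (Fin n) →L[ℝ] ℝ :=
  (M * γ * x k ^ (γ - 1) * (Real.sqrt (c - sq2 k x))⁻¹) • prj k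
    + (M * x k ^ γ * (Real.sqrt (c - sq2 k x))⁻¹ ^ 3) • Lsum k x

noncomputable def DDW (x : EuclideanSpace ℝ (Fin n)) :
    EuclideanSpace ℝ (Fin n) →L[ℝ] EuclideanSpace ℝ (Fin n) →L[ℝ] ℝ :=
  (DW k (M * γ) (γ - 1) c x).smulRight (prj k)
    + ∑ j ∈ Finset.univ.erase k,
        ((C2 k M γ c x) • prj j + (x j) • dc2 k M γ c x).smulRight (prj j)

theorem hasFDerivAt_DW (x : EuclideanSpace ℝ (Fin n)) (hx : 0 < x k) (hs : sq2 k x < c) :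
    HasFDerivAt (fun y : EuclideanSpace ℝ (Fin n) => DW k M γ c y) (DDW k M γ c x) x := by
  have hfun : (fun y : EuclideanSpace ℝ (Fin n) => DW k M γ c y)
      = fun y => (-(M * γ) * y k ^ (γ - 1) * Real.sqrt (c - sq2 k y)) • prj k
        + ∑ j ∈ Finset.univ.erase k,
            ((M * y k ^ γ * (Real.sqrt (c - sq2 k y))⁻¹) * y j) • prj j := by
    funext y
    unfold DW Lsum
    rw [Finset.smul_sum]
    congr 1
    · congr 1; ring
    · refine Finset.sum_congr rfl fun j _ => ?_
      rw [smul_smul]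
  rw [hfun]
  unfold DDW
  apply HasFDerivAt.add
  · exact (hasFDerivAt_W k (M * γ) (γ - 1) c x hx hs).smul_const (prj k)
  · apply HasFDerivAt.fun_sum
    intro j hj
    have h1 : HasFDerivAt
        (fun y : EuclideanSpace ℝ (Fin n) => (M * y k ^ γ * (Real.sqrt (c - sq2 k y))⁻¹) * y j)
        ((C2 k M γ c x) • prj j + (x j) • dc2 k M γ c x) x := by
      have := (hasFDerivAt_c2 k M γ c x hx hs).mul ((prj (n := n) j).hasFDerivAt)
      exact this
    exact h1.smul_const (prj j)

theorem fderiv_fderiv_W (x : EuclideanSpace ℝ (Fin n)) (hx : 0 < x k) (hs : sq2 k x < c) :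
    fderiv ℝ (fderiv ℝ
        (fun y : EuclideanSpace ℝ (Fin n) => -M * y k ^ γ * Real.sqrt (c - sq2 k y))) x
      = DDW k M γ c x := by
  have hck : Continuous fun y : EuclideanSpace ℝ (Fin n) => y k := (prj (n := n) k).continuous
  have hcs : Continuous fun y : EuclideanSpace ℝ (Fin n) => sq2 k y := by
    unfold sq2
    exact continuous_finset_sum _ fun j _ => ((prj (n := n) j).continuous.pow 2)
  have hΩ : IsOpen {y : EuclideanSpace ℝ (Fin n) | 0 < y k ∧ sq2 k y < c} :=
    (isOpen_lt continuous_const hck).and (isOpen_lt hcs continuous_const)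
  have hmem : {y : EuclideanSpace ℝ (Fin n) | 0 < y k ∧ sq2 k y < c} ∈ nhds x :=
    hΩ.mem_nhds ⟨hx, hs⟩
  have hEv : fderiv ℝ (fun y : EuclideanSpace ℝ (Fin n) =>
      -M * y k ^ γ * Real.sqrt (c - sq2 k y)) =ᶠ[nhds x] fun y => DW k M γ c y := by
    filter_upwards [hmem] with y hy
    exact (hasFDerivAt_W k M γ c y hy.1 hy.2).fderiv
  rw [hEv.fderiv_eq, (hasFDerivAt_DW k M γ c x hx hs).fderiv]
open Finset Real

variable {n : ℕ} (k : Fin n) (M γ c : ℝ)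

theorem DDW_entry (x : EuclideanSpace ℝ (Fin n)) (i j : Fin n) :
    DDW k M γ c x (EuclideanSpace.single i (1:ℝ)) (EuclideanSpace.single j (1:ℝ)) =
      if i = k then
        (if j = k then -(M * γ) * (γ - 1) * x k ^ (γ - 1 - 1) * Real.sqrt (c - sq2 k x)
         else (M * γ * x k ^ (γ - 1) * (Real.sqrt (c - sq2 k x))⁻¹) * x j)
      else
        (if j = k then (M * γ * x k ^ (γ - 1) * (Real.sqrt (c - sq2 k x))⁻¹) * x i
         else (M * x k ^ γ * (Real.sqrt (c - sq2 k x))⁻¹) * (if i = j then 1 else 0)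
           + (M * x k ^ γ * (Real.sqrt (c - sq2 k x))⁻¹ ^ 3) * x i * x j) := by
  simp only [DDW, DW, dc2, C2, ContinuousLinearMap.add_apply, ContinuousLinearMap.sum_apply,
    ContinuousLinearMap.smulRight_apply, ContinuousLinearMap.coe_smul', Pi.smul_apply,
    smul_eq_mul, prj_single, Lsum_single]
  simp only [mul_ite, mul_one, mul_zero, ite_mul, zero_mul, one_mul]
  rw [Finset.sum_ite_eq' (Finset.univ.erase k) j]
  simp only [Finset.mem_erase, Finset.mem_univ, and_true]
  by_cases hik : i = k <;> by_cases hjk : j = k <;>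
    by_cases hij : i = j <;>
    simp only [hik, hjk, hij, if_pos rfl, if_true, if_false, eq_self_iff_true, Ne,
      not_true, not_false_iff] <;>
    (try simp only [if_neg (Ne.symm hjk)]) <;>
    (try simp only [if_neg (Ne.symm hik)]) <;>
    (try simp only [if_neg (Ne.symm hij)]) <;>
    (try simp only [if_pos (Eq.symm hij)]) <;>
    (try simp only [if_pos (Eq.symm hik)]) <;>
    (try simp only [if_pos (Eq.symm hjk)]) <;>
    ring
open Finset Real

theorem sum_uw_left {n : ℕ} (k : Fin n) (u : Fin n → ℝ) (p q : ℝ) :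
    ∑ j, (p * u j + (if j = k then q else 0)) * u j
      = p * (∑ j, u j * u j) + q * u k := by
  rw [Finset.sum_congr rfl (fun j _ => show _ = p * (u j * u j) + (if j = k then q * u j else 0)
    from by split_ifs <;> ring)]
  rw [Finset.sum_add_distrib, ← Finset.mul_sum,
    Finset.sum_ite_eq' Finset.univ k (fun j => q * u j)]
  simp

theorem sum_uw_right {n : ℕ} (k : Fin n) (u : Fin n → ℝ) (p q : ℝ) :
    ∑ j, (p * u j + q * (if j = k then 1 else 0)) * (if j = k then 1 else 0)
      = p * u k + q := by
  rw [Finset.sum_congr rfl (fun j _ => show _ = (if j = k then p * u j + q else 0)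
    from by split_ifs <;> ring)]
  rw [Finset.sum_ite_eq' Finset.univ k (fun j => p * u j + q)]
  simp

theorem det_formula {n : ℕ} (hn : 2 ≤ n) (k : Fin n) (aa bb cc dd S : ℝ) (haa : aa ≠ 0)
    (u : Fin n → ℝ) (hu : u k = 0) (hS : S = ∑ j, u j ^ 2) :
    (Matrix.of fun i j : Fin n => aa * (if i = j then 1 else 0) + bb * u i * u j
       + cc * (u i * (if j = k then 1 else 0) + (if i = k then 1 else 0) * u j)
       + (dd - aa) * (if i = k then 1 else 0) * (if j = k then 1 else 0)).det
    = aa ^ (n - 2) * ((aa + bb * S) * dd - cc ^ 2 * S) := by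
  classical
  have hS' : S = ∑ j, u j * u j := by
    rw [hS]; exact Finset.sum_congr rfl fun j _ => sq (u j)
  set P : Matrix (Fin n) (Fin 2) ℝ :=
    Matrix.of fun i b => if b = 0 then u i else (if i = k then 1 else 0) with hP
  set Q : Matrix (Fin 2) (Fin n) ℝ := Matrix.of fun b j =>
    if b = 0 then (bb / aa) * u j + (cc / aa) * (if j = k then 1 else 0)
    else (cc / aa) * u j + ((dd - aa) / aa) * (if j = k then 1 else 0) with hQ
  have hH : (Matrix.of fun i j : Fin n => aa * (if i = j then 1 else 0) + bb * u i * u j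
       + cc * (u i * (if j = k then 1 else 0) + (if i = k then 1 else 0) * u j)
       + (dd - aa) * (if i = k then 1 else 0) * (if j = k then 1 else 0))
      = aa • (1 + P * Q) := by
    ext i j
    simp only [Matrix.of_apply, Matrix.smul_apply, Matrix.add_apply, Matrix.mul_apply,
      Fin.sum_univ_two, hP, hQ, Matrix.one_apply, smul_eq_mul, one_ne_zero, if_false]
    field_simp
    split_ifs <;> field_simp <;> ring
  have hQP : Q * P = Matrix.of fun b b' : Fin 2 =>
      if b = 0 then (if b' = 0 then (bb / aa) * S else cc / aa)
      else (if b' = 0 then (cc / aa) * S else (dd - aa) / aa) := by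
    ext b b'
    rw [Matrix.mul_apply]
    fin_cases b <;> fin_cases b' <;>
      simp only [hP, hQ, Matrix.of_apply, Fin.mk_zero, Fin.mk_one, Matrix.cons_val',
        if_true, if_false, one_ne_zero, Fin.zero_eta, Fin.isValue] <;>
      norm_num
    · rw [sum_uw_left k u (bb/aa) (cc/aa), hu, ← hS']; ring
    · exact Or.inr hu
    · rw [sum_uw_left k u (cc/aa) ((dd-aa)/aa), hu, ← hS']; ring
    · exact Or.inr hu
  have hdet : (Matrix.of fun i j : Fin n => aa * (if i = j then 1 else 0) + bb * u i * u j
       + cc * (u i * (if j = k then 1 else 0) + (if i = k then 1 else 0) * u j)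
       + (dd - aa) * (if i = k then 1 else 0) * (if j = k then 1 else 0)).det
      = aa ^ n * (1 + Q * P).det := by
    rw [hH, Matrix.det_smul, Matrix.det_one_add_mul_comm, Fintype.card_fin]
  rw [hdet, hQP]
  have hdet2 : (1 + Matrix.of fun b b' : Fin 2 =>
      if b = 0 then (if b' = 0 then (bb / aa) * S else cc / aa)
      else (if b' = 0 then (cc / aa) * S else (dd - aa) / aa)).det
      = (1 + (bb / aa) * S) * (1 + (dd - aa) / aa) - (cc / aa) * ((cc / aa) * S) := by
    rw [Matrix.det_fin_two]
    simp [Matrix.one_apply]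
  rw [hdet2]
  have hnn : n = (n - 2) + 2 := by omega
  rw [hnn, pow_add]
  have h2 : n - 2 + 2 - 2 = n - 2 := by omega
  rw [h2]
  field_simp
  ring
open Real

theorem E2_calc (M γ c sx t F : ℝ) (hF : F ≠ 0) (hF2 : F^2 = c - sx)
    (h1 : t^γ * t^(γ-1-1) = t^(2*γ-2)) (h2 : t^(γ-1) * t^(γ-1) = t^(2*γ-2)) :
    ((M * t^γ * F⁻¹) + (M*t^γ*F⁻¹^3)*sx) * (-(M*γ)*(γ-1)*t^(γ-1-1)*F)
      - (M*γ*t^(γ-1)*F⁻¹)^2*sx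
    = M^2*γ*(t^(2*γ-2)) * (((1-γ)*c - γ*sx) / F^2) := by
  have hc' : c = F^2 + sx := by linarith
  have h4 : (t^(γ-1))^2 = t^γ * t^(γ-1-1) := by rw [sq]; exact h2.trans h1.symm
  rw [hc', ← h1, mul_pow, mul_pow, mul_pow, h4]
  field_simp
  ring

theorem key_ineq (n : ℕ) (hn : 2 ≤ n) (A α l β γ c M t sx : ℝ)
    (hA : 0 < A) (hα : 0 ≤ α) (hl : 0 < l)
    (hγ0 : 0 < γ) (hγ1 : γ < 1)
    (hγeq : γ * (n + α) = β - n + 1)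
    (hc' : c = (1+γ)/(1-γ) * l^2)
    (hM1 : 1 ≤ M)
    (hMK : A / (γ * (Real.sqrt (c - l^2)) ^ α * (Real.sqrt c) ^ (-(n:ℝ)) * l^2) ≤ M)
    (ht : 0 < t) (hsx0 : 0 ≤ sx) (hsxl : sx ≤ l^2) :
    A * t ^ (β - n - 1) * |(-M) * t ^ γ * Real.sqrt (c - sx)| ^ (-α)
      ≤ (M * t^γ * (Real.sqrt (c-sx))⁻¹)^(n-2) *
        (((M * t^γ * (Real.sqrt (c-sx))⁻¹) + (M*t^γ*(Real.sqrt (c-sx))⁻¹^3)*sx)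
            * (-(M*γ)*(γ-1)*t^(γ-1-1)*Real.sqrt (c-sx))
          - (M*γ*t^(γ-1)*(Real.sqrt (c-sx))⁻¹)^2*sx) := by
  have h1γ : 0 < 1 - γ := by linarith
  have hM0 : 0 < M := lt_of_lt_of_le one_pos hM1
  have hcl : c - l^2 = (2*γ/(1-γ))*l^2 := by rw [hc']; field_simp; ring
  have hclpos : 0 < c - l^2 := by rw [hcl]; positivity
  have hcsx : 0 < c - sx := by linarith
  set F := Real.sqrt (c - sx) with hFdef
  have hF0 : 0 < F := Real.sqrt_pos.2 hcsx
  have hF2 : F^2 = c - sx := Real.sq_sqrt hcsx.le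
  set F₀ := Real.sqrt (c - l^2) with hF0def
  set F₁ := Real.sqrt c with hF1def
  have hF₀0 : 0 < F₀ := Real.sqrt_pos.2 hclpos
  have hF₁0 : 0 < F₁ := Real.sqrt_pos.2 (by nlinarith)
  have hFF₀ : F₀ ≤ F := Real.sqrt_le_sqrt (by linarith)
  have hFF₁ : F ≤ F₁ := Real.sqrt_le_sqrt (by linarith)
  have hBv : l^2 ≤ (1-γ)*c - γ*sx := by
    have h5 : (1-γ)*c = (1+γ)*l^2 := by rw [hc']; field_simp
    nlinarith [mul_le_mul_of_nonneg_left hsxl hγ0.le]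
  have hBv0 : 0 < (1-γ)*c - γ*sx := lt_of_lt_of_le (by positivity) hBv
  -- rpow exponent facts
  have h1 : t^γ * t^(γ-1-1) = t^(2*γ-2) := by
    rw [← Real.rpow_add ht]; congr 1; ring
  have h2 : t^(γ-1) * t^(γ-1) = t^(2*γ-2) := by
    rw [← Real.rpow_add ht]; congr 1; ring
  rw [E2_calc M γ c sx t F (ne_of_gt hF0) hF2 h1 h2]
  -- absolute value
  have habs : |(-M) * t ^ γ * F| = M * t^γ * F := by
    rw [show (-M) * t ^ γ * F = -(M * t^γ * F) from by ring, abs_neg,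
      abs_of_pos (by positivity)]
  rw [habs]
  -- LHS as product with t^(n*γ-2)
  have hLHS : A * t ^ (β - n - 1) * (M * t^γ * F) ^ (-α)
      = (A * M^(-α) * F^(-α)) * t^((n:ℝ)*γ-2) := by
    rw [Real.mul_rpow (by positivity) hF0.le, Real.mul_rpow hM0.le (by positivity),
      ← Real.rpow_mul ht.le]
    rw [show A * t ^ (β - ↑n - 1) * (M ^ (-α) * t ^ (γ * -α) * F ^ (-α))
        = (A * M^(-α) * F^(-α)) * (t^(β - ↑n - 1) * t^(γ * -α)) from by ring,
      ← Real.rpow_add ht, show β - (n:ℝ) - 1 + γ * -α = (n:ℝ)*γ-2 from by linear_combination -hγeq]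
  rw [hLHS]
  -- RHS as product with t^(n*γ-2)
  have hcast : ((n-2:ℕ):ℝ) = (n:ℝ) - 2 := by
    push_cast [Nat.cast_sub hn]; ring
  have hpow : (M * t^γ * F⁻¹)^(n-2)
      = M^((n:ℝ)-2) * t^(γ*((n:ℝ)-2)) * F^(-((n:ℝ)-2)) := by
    rw [← Real.rpow_natCast (M * t^γ * F⁻¹) (n-2), hcast,
      Real.mul_rpow (by positivity) (by positivity),
      Real.mul_rpow hM0.le (by positivity),
      ← Real.rpow_mul ht.le,
      Real.inv_rpow hF0.le, ← Real.rpow_neg hF0.le]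
  have hRHS : (M * t^γ * F⁻¹)^(n-2) * (M^2*γ*(t^(2*γ-2)) * (((1-γ)*c - γ*sx) / F^2))
      = (M^(n:ℝ) * γ * F^(-(n:ℝ)) * ((1-γ)*c - γ*sx)) * t^((n:ℝ)*γ-2) := by
    rw [hpow]
    have e1 : M^((n:ℝ)-2) * M^2 = M^(n:ℝ) := by
      rw [show (M:ℝ)^2 = M^(2:ℝ) from by rw [← Real.rpow_natCast M 2]; norm_num,
        ← Real.rpow_add hM0]
      congr 1; ring
    have e2 : t^(γ*((n:ℝ)-2)) * t^(2*γ-2) = t^((n:ℝ)*γ-2) := by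
      rw [← Real.rpow_add ht]; congr 1; ring
    have e3 : F^(-((n:ℝ)-2)) / F^2 = F^(-(n:ℝ)) := by
      rw [show (F:ℝ)^2 = F^(2:ℝ) from by rw [← Real.rpow_natCast F 2]; norm_num,
        div_eq_mul_inv, ← Real.rpow_neg hF0.le, ← Real.rpow_add hF0]
      congr 1; ring
    calc M^((n:ℝ)-2) * t^(γ*((n:ℝ)-2)) * F^(-((n:ℝ)-2))
          * (M^2*γ*(t^(2*γ-2)) * (((1-γ)*c - γ*sx) / F^2))
        = (M^((n:ℝ)-2) * M^2) * (t^(γ*((n:ℝ)-2)) * t^(2*γ-2))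
            * (F^(-((n:ℝ)-2)) / F^2) * γ * ((1-γ)*c - γ*sx) := by ring
      _ = M^(n:ℝ) * t^((n:ℝ)*γ-2) * F^(-(n:ℝ)) * γ * ((1-γ)*c - γ*sx) := by
            rw [e1, e2, e3]
      _ = (M^(n:ℝ) * γ * F^(-(n:ℝ)) * ((1-γ)*c - γ*sx)) * t^((n:ℝ)*γ-2) := by ring
  rw [hRHS]
  -- reduce to the key scalar bound
  have hKey : A * M^(-α) * F^(-α) ≤ M^(n:ℝ) * γ * F^(-(n:ℝ)) * ((1-γ)*c - γ*sx) := by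
    set K := γ * F₀ ^ α * F₁ ^ (-(n:ℝ)) * l^2 with hKdef
    have hK0 : 0 < K := by positivity
    have hstep : A ≤ M^((n:ℝ)+α) * γ * (F^α * F^(-(n:ℝ))) * ((1-γ)*c - γ*sx) := by
      have hMn : M ≤ M^((n:ℝ)+α) := by
        nth_rewrite 1 [show M = M^(1:ℝ) from (Real.rpow_one M).symm]
        apply Real.rpow_le_rpow_of_exponent_le hM1
        have : (2:ℝ) ≤ (n:ℝ) := by exact_mod_cast hn
        linarith
      have hFα : F₀^α ≤ F^α := Real.rpow_le_rpow hF₀0.le hFF₀ hα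
      have hFn : F₁^(-(n:ℝ)) ≤ F^(-(n:ℝ)) := by
        rw [Real.rpow_neg hF₁0.le, Real.rpow_neg hF0.le]
        apply inv_anti₀ (by positivity)
        exact Real.rpow_le_rpow hF0.le hFF₁ (by positivity)
      have hMK' : A ≤ M * K := by
        rw [div_le_iff₀ hK0] at hMK
        linarith
      calc A ≤ M * K := hMK'
        _ ≤ M^((n:ℝ)+α) * K := by
            apply mul_le_mul_of_nonneg_right hMn hK0.le
        _ ≤ M^((n:ℝ)+α) * (γ * (F^α * F^(-(n:ℝ))) * ((1-γ)*c - γ*sx)) := by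
            apply mul_le_mul_of_nonneg_left _ (by positivity)
            rw [hKdef]
            calc γ * F₀ ^ α * F₁ ^ (-(n:ℝ)) * l^2
                ≤ γ * F^α * F^(-(n:ℝ)) * l^2 := by
                  apply mul_le_mul_of_nonneg_right _ (by positivity)
                  apply mul_le_mul _ hFn (by positivity) (by positivity)
                  exact mul_le_mul_of_nonneg_left hFα hγ0.le
              _ ≤ γ * F^α * F^(-(n:ℝ)) * ((1-γ)*c - γ*sx) := by
                  apply mul_le_mul_of_nonneg_left hBv (by positivity)
              _ = γ * (F^α * F^(-(n:ℝ))) * ((1-γ)*c - γ*sx) := by ring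
        _ = M^((n:ℝ)+α) * γ * (F^α * F^(-(n:ℝ))) * ((1-γ)*c - γ*sx) := by ring
    have hsplit : M^(n:ℝ) * γ * F^(-(n:ℝ)) * ((1-γ)*c - γ*sx)
        = (M^(-α)*F^(-α)) * (M^((n:ℝ)+α) * γ * (F^α * F^(-(n:ℝ))) * ((1-γ)*c - γ*sx)) := by
      have e1 : M^(-α) * M^((n:ℝ)+α) = M^(n:ℝ) := by
        rw [← Real.rpow_add hM0]; congr 1; ring
      have e2 : F^(-α) * F^α = 1 := by
        rw [← Real.rpow_add hF0]; norm_num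
      calc M^(n:ℝ) * γ * F^(-(n:ℝ)) * ((1-γ)*c - γ*sx)
          = (M^(-α) * M^((n:ℝ)+α)) * γ * ((F^(-α) * F^α) * F^(-(n:ℝ)))
              * ((1-γ)*c - γ*sx) := by rw [e1, e2]; ring
        _ = (M^(-α)*F^(-α)) * (M^((n:ℝ)+α) * γ * (F^α * F^(-(n:ℝ)))
              * ((1-γ)*c - γ*sx)) := by ring
    rw [hsplit]
    calc A * M^(-α) * F^(-α) = (M^(-α)*F^(-α)) * A := by ring
      _ ≤ (M^(-α)*F^(-α)) * (M^((n:ℝ)+α) * γ * (F^α * F^(-(n:ℝ))) * ((1-γ)*c - γ*sx)) := by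
          apply mul_le_mul_of_nonneg_left hstep (by positivity)
  exact mul_le_mul_of_nonneg_right hKey (Real.rpow_nonneg ht.le _)

theorem hessianDet_W {n : ℕ} (hn : 2 ≤ n) (k : Fin n) (M γ c : ℝ) (hM : 0 < M)
    (x : EuclideanSpace ℝ (Fin n)) (hx : 0 < x k) (hs : sq2 k x < c) :
    hessianDet (fun y : EuclideanSpace ℝ (Fin n) =>
        -M * y k ^ γ * Real.sqrt (c - ∑ j ∈ Finset.univ.erase k, y j ^ 2)) x
    = (M * x k ^ γ * (Real.sqrt (c - sq2 k x))⁻¹)^(n-2) *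
      (((M * x k ^ γ * (Real.sqrt (c - sq2 k x))⁻¹)
          + (M * x k ^ γ * (Real.sqrt (c - sq2 k x))⁻¹^3) * sq2 k x)
        * (-(M*γ)*(γ-1) * x k ^ (γ-1-1) * Real.sqrt (c - sq2 k x))
        - (M*γ* x k ^ (γ-1) * (Real.sqrt (c - sq2 k x))⁻¹)^2 * sq2 k x) := by
  show hessianDet (fun y : EuclideanSpace ℝ (Fin n) =>
      -M * y k ^ γ * Real.sqrt (c - sq2 k y)) x = _
  have hF0 : 0 < Real.sqrt (c - sq2 k x) := Real.sqrt_pos.2 (by linarith)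
  have htγ : 0 < x k ^ γ := Real.rpow_pos_of_pos hx γ
  have haa : M * x k ^ γ * (Real.sqrt (c - sq2 k x))⁻¹ ≠ 0 := by positivity
  set u : Fin n → ℝ := fun i => if i = k then 0 else x i with hu_def
  have hu : u k = 0 := if_pos rfl
  have hS : sq2 k x = ∑ j, u j ^ 2 := by
    rw [sq2, ← Finset.sum_erase_add Finset.univ (fun j => u j ^ 2) (Finset.mem_univ k), hu]
    have hcg : ∀ j ∈ Finset.univ.erase k, u j ^ 2 = x j ^ 2 := fun j hj => by
      rw [hu_def]; simp [Finset.ne_of_mem_erase hj]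
    rw [Finset.sum_congr rfl hcg]
    norm_num
  have hent : ∀ i j : Fin n,
      iteratedFDeriv ℝ 2 (fun y : EuclideanSpace ℝ (Fin n) =>
        -M * y k ^ γ * Real.sqrt (c - sq2 k y)) x
        ![EuclideanSpace.single i (1:ℝ), EuclideanSpace.single j (1:ℝ)]
      = DDW k M γ c x (EuclideanSpace.single i (1:ℝ)) (EuclideanSpace.single j (1:ℝ)) := by
    intro i j
    rw [iteratedFDeriv_two_apply, fderiv_fderiv_W k M γ c x hx hs]
    simp
  unfold hessianDet
  have hmat : (Matrix.of fun i j : Fin n =>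
      iteratedFDeriv ℝ 2 (fun y : EuclideanSpace ℝ (Fin n) =>
        -M * y k ^ γ * Real.sqrt (c - sq2 k y)) x
        ![EuclideanSpace.single i (1:ℝ), EuclideanSpace.single j (1:ℝ)])
      = Matrix.of fun i j : Fin n =>
          (M * x k ^ γ * (Real.sqrt (c - sq2 k x))⁻¹) * (if i = j then 1 else 0)
          + (M * x k ^ γ * (Real.sqrt (c - sq2 k x))⁻¹^3) * u i * u j
          + (M*γ* x k ^ (γ-1) * (Real.sqrt (c - sq2 k x))⁻¹)
              * (u i * (if j = k then 1 else 0) + (if i = k then 1 else 0) * u j)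
          + ((-(M*γ)*(γ-1) * x k ^ (γ-1-1) * Real.sqrt (c - sq2 k x))
              - (M * x k ^ γ * (Real.sqrt (c - sq2 k x))⁻¹))
            * (if i = k then 1 else 0) * (if j = k then 1 else 0) := by
    ext i j
    rw [Matrix.of_apply, Matrix.of_apply, hent i j, DDW_entry]
    rw [hu_def]
    by_cases hik : i = k <;> by_cases hjk : j = k <;>
      simp only [hik, hjk, if_pos rfl, if_true, if_false, eq_self_iff_true] <;>
      (try simp only [if_neg hik]) <;>
      (try simp only [if_neg hjk]) <;>
      (try simp only [if_neg (Ne.symm hik)]) <;>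
      (try simp only [if_neg (Ne.symm hjk)]) <;>
      ring
  rw [hmat, det_formula hn k _ _ _ _ (sq2 k x) haa u hu hS]


set_option maxHeartbeats 1000000 in
/-- There are constants `N > 1` and `M > 0` such that
`W(x) = -M xₙ^γ √(N²l² - |x'|²)` with `γ = (β-n+1)/(n+α)` satisfies
`det D²W ≥ A xₙ^{β-n-1} |W|^{-α}` on `{xₙ > 0, |x'| ≤ l}`. -/
theorem exists_subsolution_halfspace
    (n : ℕ) (hn : 2 ≤ n) (A α l β : ℝ) (hA : 0 < A) (hα : 0 ≤ α) (hl : 0 < l)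
    (hβ : (n : ℝ) + 1 ≤ β) (hβ' : β < α + 2 * n - 1) :
    ∃ N M : ℝ, 1 < N ∧ 0 < M ∧
      ∀ x : EuclideanSpace ℝ (Fin n),
        0 < x (lastIdx n (by omega)) →
        Real.sqrt (∑ j ∈ Finset.univ.erase (lastIdx n (by omega)), x j ^ 2) ≤ l →
        A * x (lastIdx n (by omega)) ^ (β - n - 1) *
            |-M * x (lastIdx n (by omega)) ^ ((β - n + 1) / (n + α)) *
              Real.sqrt
                (N ^ 2 * l ^ 2 -
                  ∑ j ∈ Finset.univ.erase (lastIdx n (by omega)), x j ^ 2)| ^ (-α)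
          ≤ hessianDet
              (fun y : EuclideanSpace ℝ (Fin n) =>
                -M * y (lastIdx n (by omega)) ^ ((β - n + 1) / (n + α)) *
                  Real.sqrt
                    (N ^ 2 * l ^ 2 -
                      ∑ j ∈ Finset.univ.erase (lastIdx n (by omega)), y j ^ 2)) x := by
  have hn0 : 0 < n := by omega
  set k : Fin n := lastIdx n hn0 with hk
  have hn2 : (2:ℝ) ≤ (n:ℝ) := by exact_mod_cast hn
  set γ : ℝ := (β - n + 1) / (n + α) with hγdef
  have hnα : 0 < (n:ℝ) + α := by linarith
  have hγ0 : 0 < γ := div_pos (by linarith) hnα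
  have hγ1 : γ < 1 := (div_lt_one hnα).2 (by linarith)
  have h1γ : 0 < 1 - γ := by linarith
  have hγeq : γ * (n + α) = β - n + 1 := by
    rw [hγdef]; field_simp
  set N : ℝ := Real.sqrt ((1+γ)/(1-γ)) with hNdef
  have hfrac1 : 1 < (1+γ)/(1-γ) := (one_lt_div h1γ).2 (by linarith)
  have hN1 : 1 < N := by
    have hNsq : (Real.sqrt ((1+γ)/(1-γ)))^2 = (1+γ)/(1-γ) := Real.sq_sqrt (by positivity)
    nlinarith [Real.sqrt_nonneg ((1+γ)/(1-γ)), hNsq, hfrac1]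
  have hN0 : 0 < N := lt_trans one_pos hN1
  have hN2 : N^2 = (1+γ)/(1-γ) := Real.sq_sqrt (by positivity)
  set c : ℝ := N^2 * l^2 with hcdef
  have hc' : c = (1+γ)/(1-γ) * l^2 := by rw [hcdef, hN2]
  have hcl : 0 < c - l^2 := by
    have : c - l^2 = (2*γ/(1-γ))*l^2 := by rw [hc']; field_simp; ring
    rw [this]; positivity
  have hc0 : 0 < c := by nlinarith
  set K : ℝ := γ * (Real.sqrt (c - l^2)) ^ α * (Real.sqrt c) ^ (-(n:ℝ)) * l^2 with hKdef
  have hK0 : 0 < K := by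
    have h1 : 0 < Real.sqrt (c - l^2) := Real.sqrt_pos.2 hcl
    have h2 : 0 < Real.sqrt c := Real.sqrt_pos.2 hc0
    positivity
  set M : ℝ := max 1 (A / K) with hMdef
  have hM1 : (1:ℝ) ≤ M := le_max_left _ _
  have hM0 : 0 < M := lt_of_lt_of_le one_pos hM1
  have hMK : A / K ≤ M := le_max_right _ _
  refine ⟨N, M, hN1, hM0, ?_⟩
  intro x hx hr
  have hx' : 0 < x k := hx
  have hr' : Real.sqrt (sq2 k x) ≤ l := hr
  have hsx0 : 0 ≤ sq2 k x := Finset.sum_nonneg fun j _ => sq_nonneg _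
  have hsxl : sq2 k x ≤ l^2 := by
    have := Real.sq_sqrt hsx0
    nlinarith [Real.sqrt_nonneg (sq2 k x), pow_le_pow_left₀ (Real.sqrt_nonneg (sq2 k x)) hr' 2]
  have hsc : sq2 k x < c := by nlinarith
  refine le_of_le_of_eq ?_ (hessianDet_W hn k M γ c hM0 x hx' hsc).symm
  exact key_ineq n hn A α l β γ c M (x k) (sq2 k x) hA hα hl hγ0 hγ1 hγeq hc' hM1 hMK hx' hsx0 hsxl
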